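/- arXiv:2405.10478 — 4 statements merged into one kernel-verified Lean document; each statement's English description precedes it below -/
import Mathlib

section
/- Let D ⊆ ℝ^d be Lebesgue measurable, η > 0, H_η the smoothed Heaviside function, f : ℝ^d → ℝ integrable on D, and φ, v : ℝ^d → ℝ measurable functions such that v·f is integrable on D. Define Ĵ(ψ) = ∫_D (1 − H_η(ψ(x)))·f(x) dx. Then the map t ↦ Ĵ(φ + t·v) is differentiable at t = 0 with derivative −∫_D v(x)·f(x)·H_η'(φ(x)) dx. -/
open MeasureTheory

/-- The smoothed Heaviside function `H_η` with smoothing parameter `η > 0`. -/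
noncomputable def smoothedHeaviside (η t : ℝ) : ℝ :=
  if t < -η then 0
  else if |t| ≤ η then 1/2 + t/(2*η) + (1/(2*Real.pi)) * Real.sin (Real.pi * t / η)
  else 1

/-- The derivative of the smoothed Heaviside function. -/
noncomputable def smoothedHeavisideDeriv (η t : ℝ) : ℝ :=
  if |t| ≤ η then (1 + Real.cos (Real.pi * t / η)) / (2*η) else 0

lemma shd_nonneg {η : ℝ} (hη : 0 < η) (t : ℝ) : 0 ≤ smoothedHeavisideDeriv η t := by
  unfold smoothedHeavisideDeriv
  split
  · have h1 : (0:ℝ) ≤ 1 + Real.cos (Real.pi * t / η) := by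
      have := Real.neg_one_le_cos (Real.pi * t / η); linarith
    have h2 : (0:ℝ) < 2*η := by linarith
    exact div_nonneg h1 (le_of_lt h2)
  · exact le_refl 0

lemma shd_le {η : ℝ} (hη : 0 < η) (t : ℝ) : smoothedHeavisideDeriv η t ≤ 1/η := by
  unfold smoothedHeavisideDeriv
  split
  · have := Real.cos_le_one (Real.pi * t / η)
    rw [div_le_div_iff₀ (by linarith) hη]
    nlinarith
  · positivity

lemma shd_continuous {η : ℝ} (hη : 0 < η) : Continuous (smoothedHeavisideDeriv η) := by
  unfold smoothedHeavisideDeriv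
  apply Continuous.if_le
  · continuity
  · continuity
  · exact continuous_abs
  · exact continuous_const
  · intro x hx
    rcases abs_eq (le_of_lt hη) |>.mp hx with h | h
    · subst h
      rw [mul_div_assoc, div_self (ne_of_gt hη), mul_one, Real.cos_pi]
      ring
    · subst h
      rw [mul_div_assoc, neg_div, div_self (ne_of_gt hη), mul_neg, mul_one, Real.cos_neg, Real.cos_pi]
      ring

lemma sh_antideriv {η : ℝ} (hη : 0 < η) (s : ℝ) :
    HasDerivAt (fun u : ℝ => 1/2 + u/(2*η) + (1/(2*Real.pi)) * Real.sin (Real.pi * u / η))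
      ((1 + Real.cos (Real.pi * s / η)) / (2*η)) s := by
  have hπ := Real.pi_ne_zero
  have inner : HasDerivAt (fun u : ℝ => Real.pi * u / η) (Real.pi / η) s := by
    simpa using ((hasDerivAt_id s).const_mul Real.pi).div_const η
  have hsin : HasDerivAt (fun u : ℝ => Real.sin (Real.pi * u / η))
      (Real.cos (Real.pi * s / η) * (Real.pi / η)) s :=
    (Real.hasDerivAt_sin _).comp s inner
  have h2 : HasDerivAt (fun u : ℝ => u/(2*η)) (1/(2*η)) s := by
    simpa using (hasDerivAt_id s).div_const (2*η)
  have := ((h2.const_add (1/2)).add (hsin.const_mul (1/(2*Real.pi))))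
  refine this.congr_deriv ?_
  field_simp

lemma sh_eq_integral {η : ℝ} (hη : 0 < η) :
    smoothedHeaviside η = fun t => ∫ s in (-η)..t, smoothedHeavisideDeriv η s := by
  have hint : ∀ a b : ℝ, IntervalIntegrable (smoothedHeavisideDeriv η) volume a b :=
    fun a b => (shd_continuous hη).intervalIntegrable a b
  have hzero : ∀ a b : ℝ, η ≤ a → (∫ s in a..b, smoothedHeavisideDeriv η s) = 0 ∨ True := fun _ _ _ => Or.inr trivial
  -- value on the middle part
  have hmid : ∀ t : ℝ, |t| ≤ η → (∫ s in (-η)..t, smoothedHeavisideDeriv η s)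
      = 1/2 + t/(2*η) + (1/(2*Real.pi)) * Real.sin (Real.pi * t / η) := by
    intro t ht
    have hmem : ∀ s ∈ Set.uIcc (-η) t, smoothedHeavisideDeriv η s
        = (1 + Real.cos (Real.pi * s / η)) / (2*η) := by
      intro s hs
      have h1 : -η ≤ t := (abs_le.mp ht).1
      rw [Set.uIcc_of_le h1] at hs
      have : |s| ≤ η := abs_le.mpr ⟨hs.1, le_trans hs.2 (abs_le.mp ht).2⟩
      simp [smoothedHeavisideDeriv, this]
    have hcont : Continuous (fun s : ℝ => (1 + Real.cos (Real.pi * s / η)) / (2*η)) := by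
      continuity
    rw [intervalIntegral.integral_congr hmem,
      intervalIntegral.integral_eq_sub_of_hasDerivAt (fun s _ => sh_antideriv hη s)
        (hcont.intervalIntegrable (-η) t)]
    have : Real.pi * (-η) / η = -Real.pi := by field_simp
    rw [this, Real.sin_neg, Real.sin_pi]
    field_simp
    ring
  -- zero outside on the left / right
  have hz : ∀ a b : ℝ, (b ≤ -η ∨ η ≤ a) → (∫ s in a..b, smoothedHeavisideDeriv η s) = 0 ∨ True := fun _ _ _ => Or.inr trivial
  have hzeroOn : ∀ a b : ℝ, (∀ s ∈ Set.uIcc a b, smoothedHeavisideDeriv η s = 0) →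
      (∫ s in a..b, smoothedHeavisideDeriv η s) = 0 := by
    intro a b h
    rw [intervalIntegral.integral_congr h, intervalIntegral.integral_zero]
  have hleft : ∀ s : ℝ, s ≤ -η → smoothedHeavisideDeriv η s = 0 := by
    intro s hs
    unfold smoothedHeavisideDeriv
    split
    · rename_i h
      have : s = -η := le_antisymm hs (abs_le.mp h).1
      rw [this]
      rw [show Real.pi * (-η) / η = -Real.pi by field_simp, Real.cos_neg, Real.cos_pi]
      ring
    · rfl
  have hright : ∀ s : ℝ, η ≤ s → smoothedHeavisideDeriv η s = 0 := by
    intro s hs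
    unfold smoothedHeavisideDeriv
    split
    · rename_i h
      have : s = η := le_antisymm (abs_le.mp h).2 hs
      rw [this]
      rw [show Real.pi * η / η = Real.pi by field_simp, Real.cos_pi]
      ring
    · rfl
  funext t
  unfold smoothedHeaviside
  split
  · rename_i h
    -- t < -η
    refine (hzeroOn (-η) t ?_).symm
    intro s hs
    rw [Set.uIcc_of_ge (by linarith)] at hs
    exact hleft s hs.2
  · rename_i h
    split
    · rename_i h2
      exact (hmid t h2).symm
    · rename_i h2
      -- t > η
      have hηt : η ≤ t := by
        by_contra hc
        push_neg at hc
        exact h2 (abs_le.mpr ⟨le_of_not_gt h, le_of_lt hc⟩)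
      have hsplit := intervalIntegral.integral_add_adjacent_intervals
        (hint (-η) η) (hint η t)
      rw [← hsplit, hmid η (by rw [abs_of_pos hη]),
        hzeroOn η t (fun s hs => hright s (by rw [Set.uIcc_of_le hηt] at hs; exact hs.1))]
      rw [show Real.pi * η / η = Real.pi by field_simp, Real.sin_pi]
      field_simp
      ring

lemma sh_hasDerivAt {η : ℝ} (hη : 0 < η) (t : ℝ) :
    HasDerivAt (smoothedHeaviside η) (smoothedHeavisideDeriv η t) t := by
  rw [sh_eq_integral hη]
  exact intervalIntegral.integral_hasDerivAt_right
    ((shd_continuous hη).intervalIntegrable (-η) t)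
    ((shd_continuous hη).stronglyMeasurableAtFilter _ _)
    (shd_continuous hη).continuousAt

lemma sh_at_eta {η : ℝ} (hη : 0 < η) : smoothedHeaviside η η = 1 := by
  unfold smoothedHeaviside
  rw [if_neg (by linarith), if_pos (by rw [abs_of_pos hη]),
    show Real.pi * η / η = Real.pi by field_simp, Real.sin_pi, mul_zero, add_zero,
    show η/(2*η) = 1/2 by field_simp]
  norm_num

lemma sh_mem {η : ℝ} (hη : 0 < η) (t : ℝ) : smoothedHeaviside η t ∈ Set.Icc (0:ℝ) 1 := by
  have hint : ∀ a b : ℝ, IntervalIntegrable (smoothedHeavisideDeriv η) volume a b :=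
    fun a b => (shd_continuous hη).intervalIntegrable a b
  have hmono : ∀ a b : ℝ, a ≤ b →
      (∫ s in (-η)..a, smoothedHeavisideDeriv η s) ≤ ∫ s in (-η)..b, smoothedHeavisideDeriv η s := by
    intro a b hab
    rw [← intervalIntegral.integral_add_adjacent_intervals (hint (-η) a) (hint a b)]
    have : (0:ℝ) ≤ ∫ s in a..b, smoothedHeavisideDeriv η s :=
      intervalIntegral.integral_nonneg hab (fun u _ => shd_nonneg hη u)
    linarith
  have key : ∀ u : ℝ, smoothedHeaviside η u = ∫ s in (-η)..u, smoothedHeavisideDeriv η s :=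
    fun u => congrFun (sh_eq_integral hη) u
  constructor
  · rcases le_total (-η) t with h | h
    · rw [key t]
      simpa using hmono (-η) t h
    · unfold smoothedHeaviside
      rcases lt_or_ge t (-η) with h2 | h2
      · rw [if_pos h2]
      · have ht : t = -η := le_antisymm h h2
        rw [ht, if_neg (by linarith), if_pos (by rw [abs_neg, abs_of_pos hη]),
          show Real.pi * (-η) / η = -Real.pi by field_simp, Real.sin_neg, Real.sin_pi,
          neg_zero, mul_zero, add_zero, show (-η)/(2*η) = -(1/2) by field_simp]
        norm_num
  · rcases le_total t η with h | h
    · have h1 := hmono t η h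
      rw [key t]
      rw [← key η, sh_at_eta hη] at h1
      exact h1
    · rcases eq_or_lt_of_le h with heq | hlt
      · rw [← heq, sh_at_eta hη]
      · unfold smoothedHeaviside
        rw [if_neg (by linarith), if_neg (by rw [abs_le]; push_neg; intro; linarith)]

/-- For `Ĵ(ψ) = ∫_D (1 − H_η(ψ)) f dx`, the map `t ↦ Ĵ(φ + t v)` is differentiable
at `t = 0` with derivative `−∫_D v f H_η'(φ) dx`. -/
theorem hasDerivAt_relaxed_functional {d : ℕ}
    (D : Set (EuclideanSpace ℝ (Fin d))) (hD : MeasurableSet D)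
    (η : ℝ) (hη : 0 < η)
    (f φ v : EuclideanSpace ℝ (Fin d) → ℝ)
    (hφ : Measurable φ) (hv : Measurable v)
    (hf : IntegrableOn f D)
    (hvf : IntegrableOn (fun x => v x * f x) D) :
    HasDerivAt (fun t : ℝ => ∫ x in D, (1 - smoothedHeaviside η (φ x + t * v x)) * f x)
      (-∫ x in D, v x * f x * smoothedHeavisideDeriv η (φ x)) 0 := by
  have hHcont : Continuous (smoothedHeaviside η) :=
    continuous_iff_continuousAt.mpr fun t => (sh_hasDerivAt hη t).continuousAt
  set μ := volume.restrict D with hμ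
  set F : ℝ → EuclideanSpace ℝ (Fin d) → ℝ :=
    fun t x => (1 - smoothedHeaviside η (φ x + t * v x)) * f x with hF
  set F' : ℝ → EuclideanSpace ℝ (Fin d) → ℝ :=
    fun t x => -(v x * smoothedHeavisideDeriv η (φ x + t * v x)) * f x with hF'
  have hfm : AEStronglyMeasurable f μ := hf.aestronglyMeasurable
  have hF_meas : ∀ᶠ t in nhds (0:ℝ), AEStronglyMeasurable (F t) μ := by
    refine Filter.Eventually.of_forall fun t => ?_
    exact ((measurable_const.sub
      (hHcont.measurable.comp (hφ.add (hv.const_mul t)))).aestronglyMeasurable.mul hfm)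
  have hF_int : Integrable (F 0) μ := by
    apply Integrable.bdd_mul (c := 1) hf
    · exact (measurable_const.sub
        (hHcont.measurable.comp (hφ.add (hv.const_mul 0)))).aestronglyMeasurable
    · refine Filter.Eventually.of_forall fun x => ?_
      have h1 := sh_mem hη (φ x + 0 * v x)
      rw [Real.norm_eq_abs, abs_le]
      constructor <;> [linarith [h1.2]; linarith [h1.1]]
  have hF'_meas : AEStronglyMeasurable (F' 0) μ := by
    exact (((hv.mul ((shd_continuous hη).measurable.comp
      (hφ.add (hv.const_mul 0)))).neg.aestronglyMeasurable).mul hfm)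
  have h_bound : ∀ᵐ x ∂μ, ∀ t ∈ Metric.ball (0:ℝ) 1,
      ‖F' t x‖ ≤ |v x * f x| / η := by
    refine Filter.Eventually.of_forall fun x t _ => ?_
    have h0 := shd_nonneg hη (φ x + t * v x)
    have h1 := shd_le hη (φ x + t * v x)
    rw [hF']
    simp only [Real.norm_eq_abs, abs_mul, abs_neg, abs_of_nonneg h0]
    calc |v x| * smoothedHeavisideDeriv η (φ x + t * v x) * |f x|
        = |v x| * |f x| * smoothedHeavisideDeriv η (φ x + t * v x) := by ring
      _ ≤ |v x| * |f x| * (1/η) := by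
          apply mul_le_mul_of_nonneg_left h1 (by positivity)
      _ = |v x| * |f x| / η := by ring
  have bound_int : Integrable (fun x => |v x * f x| / η) μ := by
    exact (hvf.abs).div_const η
  have h_diff : ∀ᵐ x ∂μ, ∀ t ∈ Metric.ball (0:ℝ) 1,
      HasDerivAt (fun t => F t x) (F' t x) t := by
    refine Filter.Eventually.of_forall fun x t _ => ?_
    have inner : HasDerivAt (fun t : ℝ => φ x + t * v x) (v x) t :=
      (hasDerivAt_mul_const (v x)).const_add (φ x)
    have hchain : HasDerivAt (fun t : ℝ => smoothedHeaviside η (φ x + t * v x))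
        (smoothedHeavisideDeriv η (φ x + t * v x) * v x) t :=
      ((sh_hasDerivAt hη (φ x + t * v x)).comp t inner :
        HasDerivAt (smoothedHeaviside η ∘ fun t => φ x + t * v x) _ t)
    have := (hchain.const_sub 1).mul_const (f x)
    refine this.congr_deriv ?_
    rw [hF']
    ring
  have key := hasDerivAt_integral_of_dominated_loc_of_deriv_le (μ := μ)
    (F := F) (F' := F') (x₀ := 0) (bound := fun x => |v x * f x| / η)
    (Metric.ball_mem_nhds 0 one_pos) hF_meas hF_int hF'_meas h_bound bound_int h_diff
  have hder := key.2
  refine hder.congr_deriv ?_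
  rw [← MeasureTheory.integral_neg]
  apply integral_congr_ae
  refine Filter.Eventually.of_forall fun x => ?_
  rw [hF']
  simp only [zero_mul, add_zero]
  ring
end

section
/- (Smoothed form of Proposition 1.) Let D ⊆ ℝ^d be Lebesgue measurable, η > 0, H_η the smoothed Heaviside function, f : ℝ^d → ℝ integrable on D, and φ, v : ℝ^d → ℝ measurable with v·f integrable on D. Assume φ is differentiable almost everywhere on D with |∇φ(x)| = 1 for almost every x ∈ D. Define Ĵ(ψ) = ∫_D (1 − H_η(ψ(x)))·f(x) dx. Then the derivative of t ↦ Ĵ(φ + t·v) at t = 0 equals −∫_D v(x)·f(x)·H_η'(φ(x))·|∇φ(x)| dx, i.e. the Gateaux derivative of the relaxed functional coincides with the relaxation over D of the shape derivative J'(Ω)(−v·n) = −∫_{∂Ω} v·f ds. -/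
open MeasureTheory

/-- The middle piece of the smoothed Heaviside function is differentiable. -/
lemma hasDerivAt_middle (η : ℝ) (hη : 0 < η) (t : ℝ) :
    HasDerivAt (fun s : ℝ => 1/2 + s/(2*η) + (1/(2*Real.pi)) * Real.sin (Real.pi * s / η))
      ((1 + Real.cos (Real.pi * t / η)) / (2*η)) t := by
  have hinner : HasDerivAt (fun s : ℝ => Real.pi * s / η) (Real.pi * 1 / η) t :=
    ((hasDerivAt_id t).const_mul Real.pi).div_const η
  have hsin := hinner.sin
  have hg := (((hasDerivAt_const t ((1:ℝ)/2)).add ((hasDerivAt_id t).div_const (2*η))).add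
    (hsin.const_mul (1/(2*Real.pi))))
  refine (hg : HasDerivAt (fun s : ℝ => 1/2 + s/(2*η) + (1/(2*Real.pi)) * Real.sin (Real.pi * s / η)) _ t).congr_deriv ?_
  have hπ := Real.pi_ne_zero
  field_simp
  ring

lemma hasDerivAt_smoothedHeaviside (η : ℝ) (hη : 0 < η) (t : ℝ) :
    HasDerivAt (smoothedHeaviside η) (smoothedHeavisideDeriv η t) t := by
  rcases lt_trichotomy t (-η) with h | h | h
  · -- t < -η : locally constant 0
    have hH' : smoothedHeavisideDeriv η t = 0 := by
      unfold smoothedHeavisideDeriv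
      rw [if_neg]
      push_neg
      calc η < -t := by linarith
        _ ≤ |t| := neg_le_abs t
    rw [hH']
    refine (hasDerivAt_const t (0:ℝ)).congr_of_eventuallyEq ?_
    filter_upwards [Iio_mem_nhds h] with s hs
    simp only [smoothedHeaviside, if_pos (Set.mem_Iio.mp hs)]
  · -- t = -η : glue constant 0 (left) and middle piece (right)
    rw [h]
    have habs : |(-η)| ≤ η := by rw [abs_neg, abs_of_pos hη]
    have hval : smoothedHeaviside η (-η) = 0 := by
      unfold smoothedHeaviside
      rw [if_neg (lt_irrefl _), if_pos habs]
      rw [show Real.pi * -η / η = -Real.pi by field_simp, Real.sin_neg, Real.sin_pi]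
      field_simp
      try ring
    have hzero : (1 + Real.cos (Real.pi * (-η) / η)) / (2*η) = 0 := by
      rw [show Real.pi * -η / η = -Real.pi by field_simp, Real.cos_neg, Real.cos_pi]
      ring
    have hH' : smoothedHeavisideDeriv η (-η) = (1 + Real.cos (Real.pi * (-η) / η)) / (2*η) := by
      unfold smoothedHeavisideDeriv; rw [if_pos habs]
    rw [hH']
    have hl : HasDerivWithinAt (smoothedHeaviside η)
        ((1 + Real.cos (Real.pi * (-η) / η)) / (2*η)) (Set.Iic (-η)) (-η) := by
      rw [hzero]
      refine (hasDerivWithinAt_const (-η) _ (0:ℝ)).congr_of_eventuallyEq ?_ hval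
      filter_upwards [self_mem_nhdsWithin] with s hs
      rcases eq_or_lt_of_le (Set.mem_Iic.mp hs) with h1 | h1
      · rw [h1, hval]
      · simp only [smoothedHeaviside, if_pos h1]
    have hr : HasDerivWithinAt (smoothedHeaviside η)
        ((1 + Real.cos (Real.pi * (-η) / η)) / (2*η)) (Set.Ici (-η)) (-η) := by
      refine ((hasDerivAt_middle η hη (-η)).hasDerivWithinAt).congr_of_eventuallyEq ?_ ?_
      · filter_upwards [self_mem_nhdsWithin,
          mem_nhdsWithin_of_mem_nhds (Iio_mem_nhds (by linarith : -η < η))] with s hs1 hs2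
        have habs' : |s| ≤ η := abs_le.mpr ⟨hs1, le_of_lt hs2⟩
        simp only [smoothedHeaviside, if_neg (not_lt.mpr (Set.mem_Ici.mp hs1)), if_pos habs']
      · simp only [smoothedHeaviside, if_neg (lt_irrefl _), if_pos habs]
    have := hl.union hr
    rw [Set.Iic_union_Ici] at this
    exact this.hasDerivAt (by simp)
  · rcases lt_trichotomy t η with h2 | h2 | h2
    · -- -η < t < η : middle piece
      have habs : |t| ≤ η := abs_le.mpr ⟨le_of_lt h, le_of_lt h2⟩
      have hH' : smoothedHeavisideDeriv η t = (1 + Real.cos (Real.pi * t / η)) / (2*η) := by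
        unfold smoothedHeavisideDeriv; rw [if_pos habs]
      rw [hH']
      refine (hasDerivAt_middle η hη t).congr_of_eventuallyEq ?_
      filter_upwards [Ioo_mem_nhds h h2] with s hs
      have habs' : |s| ≤ η := abs_le.mpr ⟨le_of_lt hs.1, le_of_lt hs.2⟩
      simp only [smoothedHeaviside, if_neg (not_lt.mpr (le_of_lt hs.1)), if_pos habs']
    · -- t = η : glue middle piece (left) and constant 1 (right)
      rw [h2]
      have habs : |η| ≤ η := by rw [abs_of_pos hη]
      have hval : smoothedHeaviside η η = 1 := by
        unfold smoothedHeaviside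
        rw [if_neg (by linarith), if_pos habs]
        rw [show Real.pi * η / η = Real.pi by field_simp, Real.sin_pi]
        field_simp
        try ring
      have hzero : (1 + Real.cos (Real.pi * η / η)) / (2*η) = 0 := by
        rw [show Real.pi * η / η = Real.pi by field_simp, Real.cos_pi]
        ring
      have hH' : smoothedHeavisideDeriv η η = (1 + Real.cos (Real.pi * η / η)) / (2*η) := by
        unfold smoothedHeavisideDeriv; rw [if_pos habs]
      rw [hH']
      have hl : HasDerivWithinAt (smoothedHeaviside η)
          ((1 + Real.cos (Real.pi * η / η)) / (2*η)) (Set.Iic η) η := by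
        refine ((hasDerivAt_middle η hη η).hasDerivWithinAt).congr_of_eventuallyEq ?_ ?_
        · filter_upwards [self_mem_nhdsWithin,
            mem_nhdsWithin_of_mem_nhds (Ioi_mem_nhds (by linarith : -η < η))] with s hs1 hs2
          have habs' : |s| ≤ η := abs_le.mpr ⟨le_of_lt hs2, hs1⟩
          simp only [smoothedHeaviside, if_neg (not_lt.mpr (le_of_lt (Set.mem_Ioi.mp hs2))), if_pos habs']
        · simp only [smoothedHeaviside, if_neg (show ¬ η < -η by linarith), if_pos habs]
      have hr : HasDerivWithinAt (smoothedHeaviside η)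
          ((1 + Real.cos (Real.pi * η / η)) / (2*η)) (Set.Ici η) η := by
        rw [hzero]
        refine (hasDerivWithinAt_const η _ (1:ℝ)).congr_of_eventuallyEq ?_ hval
        filter_upwards [self_mem_nhdsWithin] with s hs
        rcases eq_or_lt_of_le (Set.mem_Ici.mp hs) with h1 | h1
        · rw [← h1, hval]
        · have h3 : ¬ s < -η := by linarith
          have h4 : ¬ |s| ≤ η := not_le.mpr (lt_of_lt_of_le h1 (le_abs_self s))
          simp only [smoothedHeaviside, if_neg h3, if_neg h4]
      have := hl.union hr
      rw [Set.Iic_union_Ici] at this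
      exact this.hasDerivAt (by simp)
    · -- η < t : locally constant 1
      have hH' : smoothedHeavisideDeriv η t = 0 := by
        unfold smoothedHeavisideDeriv
        rw [if_neg (not_le.mpr (lt_of_lt_of_le h2 (le_abs_self t)))]
      rw [hH']
      refine (hasDerivAt_const t (1:ℝ)).congr_of_eventuallyEq ?_
      filter_upwards [Ioi_mem_nhds h2] with s hs
      have h3 : ¬ s < -η := by
        have : (0:ℝ) < s := lt_trans hη hs
        linarith
      have h4 : ¬ |s| ≤ η := not_le.mpr (lt_of_lt_of_le hs (le_abs_self s))
      simp only [smoothedHeaviside, if_neg h3, if_neg h4]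

lemma measurable_smoothedHeavisideDeriv (η : ℝ) :
    Measurable (smoothedHeavisideDeriv η) := by
  unfold smoothedHeavisideDeriv
  exact Measurable.ite (measurableSet_le (by fun_prop) measurable_const) (by fun_prop)
    measurable_const

lemma abs_smoothedHeavisideDeriv_le (η : ℝ) (hη : 0 < η) (t : ℝ) :
    |smoothedHeavisideDeriv η t| ≤ 1/η := by
  unfold smoothedHeavisideDeriv
  split
  · have h1 : (0:ℝ) ≤ 1 + Real.cos (Real.pi * t / η) := by
      nlinarith [Real.neg_one_le_cos (Real.pi * t / η)]
    rw [abs_of_nonneg (div_nonneg h1 (by positivity))]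
    rw [div_le_div_iff₀ (by positivity) hη]
    nlinarith [Real.cos_le_one (Real.pi * t / η)]
  · rw [abs_zero]
    positivity

lemma smoothedHeavisideDeriv_nonneg (η : ℝ) (hη : 0 < η) (t : ℝ) :
    0 ≤ smoothedHeavisideDeriv η t := by
  unfold smoothedHeavisideDeriv
  split
  · have := Real.neg_one_le_cos (Real.pi * t / η)
    exact div_nonneg (by linarith) (by linarith)
  · exact le_refl 0

lemma monotone_smoothedHeaviside (η : ℝ) (hη : 0 < η) :
    Monotone (smoothedHeaviside η) := by
  apply monotone_of_deriv_nonneg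
  · exact fun t => (hasDerivAt_smoothedHeaviside η hη t).differentiableAt
  · intro t
    rw [(hasDerivAt_smoothedHeaviside η hη t).deriv]
    exact smoothedHeavisideDeriv_nonneg η hη t

lemma smoothedHeaviside_nonneg (η : ℝ) (hη : 0 < η) (t : ℝ) :
    0 ≤ smoothedHeaviside η t := by
  rcases lt_or_ge t (-η) with h | h
  · simp [smoothedHeaviside, if_pos h]
  · have h0 : smoothedHeaviside η (-η) = 0 := by
      unfold smoothedHeaviside
      rw [if_neg (lt_irrefl _), if_pos (by rw [abs_neg, abs_of_pos hη])]
      rw [show Real.pi * -η / η = -Real.pi by field_simp, Real.sin_neg, Real.sin_pi]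
      field_simp
      try ring
    calc (0:ℝ) = smoothedHeaviside η (-η) := h0.symm
      _ ≤ smoothedHeaviside η t := monotone_smoothedHeaviside η hη h

lemma smoothedHeaviside_le_one (η : ℝ) (hη : 0 < η) (t : ℝ) :
    smoothedHeaviside η t ≤ 1 := by
  rcases le_or_gt t η with h | h
  · have h1 : smoothedHeaviside η η = 1 := by
      unfold smoothedHeaviside
      rw [if_neg (by linarith), if_pos (by rw [abs_of_pos hη])]
      rw [show Real.pi * η / η = Real.pi by field_simp, Real.sin_pi]
      field_simp
      try ring
    calc smoothedHeaviside η t ≤ smoothedHeaviside η η := monotone_smoothedHeaviside η hη h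
      _ = 1 := h1
  · have h3 : ¬ t < -η := by linarith
    have h4 : ¬ |t| ≤ η := not_le.mpr (lt_of_lt_of_le h (le_abs_self t))
    simp [smoothedHeaviside, if_neg h3, if_neg h4]

/-- Smoothed form of Proposition 1: if `φ` is differentiable a.e. on `D` with `|∇φ| = 1`
a.e. on `D`, then the Gateaux derivative at `t = 0` of `t ↦ Ĵ(φ + t v)`, where
`Ĵ(ψ) = ∫_D (1 − H_η(ψ)) f dx`, equals `−∫_D v f H_η'(φ) |∇φ| dx`, i.e. the relaxation
over `D` of the shape derivative `J'(Ω)(−v n) = −∫_{∂Ω} v f ds`. -/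
theorem hasDerivAt_relaxed_functional_signed_distance {d : ℕ}
    (D : Set (EuclideanSpace ℝ (Fin d))) (hD : MeasurableSet D)
    (η : ℝ) (hη : 0 < η)
    (f φ v : EuclideanSpace ℝ (Fin d) → ℝ)
    (hφ : Measurable φ) (hv : Measurable v)
    (hf : IntegrableOn f D)
    (hvf : IntegrableOn (fun x => v x * f x) D)
    (hgrad : ∀ᵐ x ∂(volume.restrict D), DifferentiableAt ℝ φ x ∧ ‖fderiv ℝ φ x‖ = 1) :
    HasDerivAt (fun t : ℝ => ∫ x in D, (1 - smoothedHeaviside η (φ x + t * v x)) * f x)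
      (-∫ x in D, v x * f x * smoothedHeavisideDeriv η (φ x) * ‖fderiv ℝ φ x‖) 0 := by
  set μ := volume.restrict D
  have hHc : Continuous (smoothedHeaviside η) :=
    continuous_iff_continuousAt.2 fun t => (hasDerivAt_smoothedHeaviside η hη t).continuousAt
  set F : ℝ → EuclideanSpace ℝ (Fin d) → ℝ :=
    fun t x => (1 - smoothedHeaviside η (φ x + t * v x)) * f x with hF
  set F' : ℝ → EuclideanSpace ℝ (Fin d) → ℝ :=
    fun t x => -(smoothedHeavisideDeriv η (φ x + t * v x) * v x * f x) with hF'
  have hmain : Integrable (F' 0) μ ∧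
      HasDerivAt (fun t => ∫ x, F t x ∂μ) (∫ x, F' 0 x ∂μ) 0 := by
    apply hasDerivAt_integral_of_dominated_loc_of_deriv_le (s := Metric.ball 0 1) (Metric.ball_mem_nhds 0 one_pos)
      (bound := fun x => (1/η) * |v x * f x|)
    · filter_upwards with t
      exact ((measurable_const.sub
        ((hHc.measurable.comp (hφ.add (hv.const_mul t))))).aestronglyMeasurable.mul hf.1)
    · refine hf.bdd_mul (c := 1) ((measurable_const.sub
        ((hHc.measurable.comp (hφ.add (hv.const_mul (0:ℝ)))))).aestronglyMeasurable) (ae_of_all _ ?_)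
      intro x
      have h0 := smoothedHeaviside_nonneg η hη (φ x + 0 * v x)
      have h1 := smoothedHeaviside_le_one η hη (φ x + 0 * v x)
      rw [Real.norm_eq_abs, abs_le]
      constructor <;> linarith
    · exact ((((measurable_smoothedHeavisideDeriv η).comp
        (hφ.add (hv.const_mul (0:ℝ)))).mul hv).aestronglyMeasurable.mul hf.1).neg
    · filter_upwards with x t ht
      have hb := abs_smoothedHeavisideDeriv_le η hη (φ x + t * v x)
      calc ‖F' t x‖ = |smoothedHeavisideDeriv η (φ x + t * v x)| * |v x * f x| := by
            simp [hF', Real.norm_eq_abs, abs_mul, mul_assoc]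
        _ ≤ (1/η) * |v x * f x| := mul_le_mul_of_nonneg_right hb (abs_nonneg _)
    · exact hvf.abs.const_mul (1/η)
    · filter_upwards with x t ht
      have hinner : HasDerivAt (fun t : ℝ => φ x + t * v x) (v x) t := by
        simpa using ((hasDerivAt_id t).mul_const (v x)).const_add (φ x)
      have hH := (hasDerivAt_smoothedHeaviside η hη (φ x + t * v x)).comp t hinner
      have := ((hasDerivAt_const t (1:ℝ)).sub hH).mul_const (f x)
      refine this.congr_deriv ?_
      simp only [hF', Function.comp]
      ring
  have hcongr : ∫ x, F' 0 x ∂μ =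
      -∫ x in D, v x * f x * smoothedHeavisideDeriv η (φ x) * ‖fderiv ℝ φ x‖ := by
    rw [← integral_neg]
    apply integral_congr_ae
    filter_upwards [hgrad] with x hx
    simp only [hF', zero_mul, add_zero, hx.2, mul_one, neg_neg]
    ring
  have := hmain.2
  rw [hcongr] at this
  exact this
end

section
/- (Shape derivative of volume, interior form.) Let θ : ℝ^d → ℝ^d be a continuously differentiable, compactly supported vector field with Lipschitz constant L, and let Ω ⊆ ℝ^d be Lebesgue measurable with finite measure. Then the function t ↦ Vol((I + tθ)(Ω)), defined for |t|·L < 1, is differentiable at t = 0 with derivative ∫_Ω div θ(x) dx. -/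
open MeasureTheory Matrix Polynomial

attribute [local instance] Matrix.normedAddCommGroup Matrix.normedSpace

variable {d : ℕ}

lemma myContDiff_det : ContDiff ℝ 1 (fun N : Matrix (Fin d) (Fin d) ℝ => N.det) := by
  simp_rw [Matrix.det_apply, Units.smul_def, zsmul_eq_mul]
  apply ContDiff.sum
  intro σ _
  exact contDiff_const.mul (contDiff_prod fun i _ =>
    ((contDiff_apply ℝ ℝ i).comp (contDiff_apply ℝ (Fin d → ℝ) (σ i))))

lemma myContDiff_phi :
    ContDiff ℝ 1 (fun p : ℝ × Matrix (Fin d) (Fin d) ℝ => (1 + p.1 • p.2).det) :=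
  myContDiff_det.comp (contDiff_const.add (contDiff_fst.smul contDiff_snd))

lemma myHasDerivAt_phi (N : Matrix (Fin d) (Fin d) ℝ) (t : ℝ) :
    HasDerivAt (fun s : ℝ => (1 + s • N).det)
      (fderiv ℝ (fun p : ℝ × Matrix (Fin d) (Fin d) ℝ => (1 + p.1 • p.2).det) (t, N) (1, 0)) t := by
  have h1 : HasDerivAt (fun s : ℝ => (s, N)) ((1 : ℝ), (0 : Matrix (Fin d) (Fin d) ℝ)) t :=
    (hasDerivAt_id t).prodMk (hasDerivAt_const t N)
  exact ((myContDiff_phi.differentiable one_ne_zero (t, N)).hasFDerivAt).comp_hasDerivAt t h1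

lemma myDeriv_at_zero (N : Matrix (Fin d) (Fin d) ℝ) :
    HasDerivAt (fun s : ℝ => (1 + s • N).det) (Matrix.trace N) 0 := by
  have heq : (fun s : ℝ => (1 + s • N).det)
      = fun s : ℝ => 1 + Matrix.trace N * s
          + (Polynomial.eval s (det (1 + (X : ℝ[X]) • N.map C)).divX.divX) * s ^ 2 :=
    funext fun s => Matrix.det_one_add_smul s N
  rw [heq]
  set q := (det (1 + (X : ℝ[X]) • N.map C)).divX.divX
  have hA : HasDerivAt (fun s : ℝ => 1 + Matrix.trace N * s) (Matrix.trace N) 0 := by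
    simpa using ((hasDerivAt_id (0:ℝ)).const_mul (Matrix.trace N)).const_add 1
  have hB : HasDerivAt (fun s : ℝ => (Polynomial.eval s q) * s ^ 2) 0 0 := by
    have := (q.hasDerivAt (0:ℝ)).mul (hasDerivAt_pow 2 (0:ℝ))
    exact (by simpa using this : HasDerivAt ((fun x => Polynomial.eval x q) * fun x => x ^ 2) 0 0)
  exact (by simpa using hA.add hB : HasDerivAt ((fun s : ℝ => 1 + Matrix.trace N * s) + fun s => (Polynomial.eval s q) * s ^ 2) (Matrix.trace N) 0)


open scoped Topology

set_option maxHeartbeats 1000000 in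
/-- Shape derivative of volume (interior form): for a `C¹`, compactly supported,
Lipschitz vector field `θ` and a measurable set `Ω` of finite measure, the map
`t ↦ Vol((I + tθ)(Ω))` is differentiable at `t = 0` with derivative `∫_Ω div θ dx`. -/
theorem hasDerivAt_volume_perturbed_identity {d : ℕ}
    (θ : EuclideanSpace ℝ (Fin d) → EuclideanSpace ℝ (Fin d))
    (hθ : ContDiff ℝ 1 θ) (hθc : HasCompactSupport θ)
    (L : NNReal) (hθL : LipschitzWith L θ)
    (Ω : Set (EuclideanSpace ℝ (Fin d))) (hΩ : MeasurableSet Ω)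
    (hΩfin : volume Ω < ⊤) :
    HasDerivAt (fun t : ℝ => (volume ((fun x => x + t • θ x) '' Ω)).toReal)
      (∫ x in Ω, LinearMap.trace ℝ (EuclideanSpace ℝ (Fin d))
        ((fderiv ℝ θ x : EuclideanSpace ℝ (Fin d) →L[ℝ] EuclideanSpace ℝ (Fin d))
          : EuclideanSpace ℝ (Fin d) →ₗ[ℝ] EuclideanSpace ℝ (Fin d))) 0 := by
  classical
  set A : EuclideanSpace ℝ (Fin d) → EuclideanSpace ℝ (Fin d) →L[ℝ] EuclideanSpace ℝ (Fin d) :=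
    fderiv ℝ θ with hA_def
  set b : Module.Basis (Fin d) ℝ (EuclideanSpace ℝ (Fin d)) := (EuclideanSpace.basisFun (Fin d) ℝ).toBasis
    with hb_def
  set M : EuclideanSpace ℝ (Fin d) → Matrix (Fin d) (Fin d) ℝ :=
    fun x => LinearMap.toMatrix b b (A x : EuclideanSpace ℝ (Fin d) →ₗ[ℝ] EuclideanSpace ℝ (Fin d))
    with hM_def
  set φ : ℝ × Matrix (Fin d) (Fin d) ℝ → ℝ := fun p => (1 + p.1 • p.2).det with hφ_def
  set w : ℝ × Matrix (Fin d) (Fin d) ℝ → ℝ := fun p => fderiv ℝ φ p (1, 0) with hw_def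
  set ε : ℝ := (2 * ((L : ℝ) + 1))⁻¹ with hε_def
  have hεpos : 0 < ε := by positivity
  have hεL : ε * (L : ℝ) < 1 := by
    rw [hε_def, inv_mul_lt_iff₀ (by positivity)]
    nlinarith [L.coe_nonneg]
  -- continuity facts
  have hA_cont : Continuous A := hθ.continuous_fderiv one_ne_zero
  have hM_cont : Continuous M := by
    have : Continuous (((LinearMap.toMatrix b b).toLinearMap.comp
        (ContinuousLinearMap.coeLM ℝ)) :
          (EuclideanSpace ℝ (Fin d) →L[ℝ] EuclideanSpace ℝ (Fin d)) → Matrix (Fin d) (Fin d) ℝ) :=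
      LinearMap.continuous_of_finiteDimensional _
    exact this.comp hA_cont
  have hAle : ∀ x, ‖A x‖ ≤ (L : ℝ) := fun x => norm_fderiv_le_of_lipschitz ℝ hθL
  -- μ is a finite measure
  set μ := volume.restrict Ω with hμ_def
  have hμfin : IsFiniteMeasure μ := by
    constructor
    rw [hμ_def, Measure.restrict_apply_univ]; exact hΩfin
  -- determinant identification
  have hdet_eq : ∀ (s : ℝ) (x : EuclideanSpace ℝ (Fin d)),
      ((1 + s • A x : EuclideanSpace ℝ (Fin d) →L[ℝ] EuclideanSpace ℝ (Fin d))).det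
        = φ (s, M x) := by
    intro s x
    have hc : ((1 + s • A x : EuclideanSpace ℝ (Fin d) →L[ℝ] EuclideanSpace ℝ (Fin d)) :
        EuclideanSpace ℝ (Fin d) →ₗ[ℝ] EuclideanSpace ℝ (Fin d))
        = 1 + s • (A x : EuclideanSpace ℝ (Fin d) →ₗ[ℝ] EuclideanSpace ℝ (Fin d)) := by
      ext v; simp
    show LinearMap.det _ = _
    rw [hc, ← LinearMap.det_toMatrix b, map_add, _root_.map_smul]
    simp [hφ_def, hM_def, LinearMap.toMatrix_one]
  -- nonvanishing of the determinant
  have hdet_ne : ∀ (s : ℝ) (x : EuclideanSpace ℝ (Fin d)), |s| * (L : ℝ) < 1 →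
      φ (s, M x) ≠ 0 := by
    intro s x hs
    rw [← hdet_eq]
    have hinj : Function.Injective
        (1 + s • A x : EuclideanSpace ℝ (Fin d) →L[ℝ] EuclideanSpace ℝ (Fin d)) := by
      intro v v' hv
      have hsub : v - v' = - (s • A x (v - v')) := by
        have h0 : v + s • A x v = v' + s • A x v' := hv
        have h1 := sub_eq_zero.mpr h0
        rw [show v + s • A x v - (v' + s • A x v') = (v - v') + s • A x (v - v') by
          simp [map_sub, smul_sub]; abel] at h1
        linear_combination (norm := module) h1
      by_contra hne
      have h1 : ‖v - v'‖ ≤ |s| * (L : ℝ) * ‖v - v'‖ := by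
        have h2 := congrArg norm hsub
        rw [norm_neg, norm_smul, Real.norm_eq_abs] at h2
        calc ‖v - v'‖ = |s| * ‖A x (v - v')‖ := h2
        _ ≤ |s| * ((L : ℝ) * ‖v - v'‖) := by
            gcongr
            exact ((A x).le_opNorm _).trans (by gcongr; exact hAle x)
        _ = |s| * (L : ℝ) * ‖v - v'‖ := by ring
      have h2 : 0 < ‖v - v'‖ := by
        rw [norm_pos_iff]; intro h; exact hne (sub_eq_zero.mp h)
      nlinarith
    intro h0
    have hker : LinearMap.ker
        ((1 + s • A x : EuclideanSpace ℝ (Fin d) →L[ℝ] EuclideanSpace ℝ (Fin d)) :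
          EuclideanSpace ℝ (Fin d) →ₗ[ℝ] EuclideanSpace ℝ (Fin d)) = ⊥ :=
      LinearMap.ker_eq_bot.mpr hinj
    have hlt := LinearMap.bot_lt_ker_of_det_eq_zero h0
    rw [hker] at hlt
    exact lt_irrefl _ hlt
  -- positivity of the determinant for |t| ≤ ε
  have hdet_pos : ∀ (t : ℝ), |t| ≤ ε → ∀ x : EuclideanSpace ℝ (Fin d), 0 < φ (t, M x) := by
    intro t ht x
    have habs : ∀ s ∈ Set.uIcc (0:ℝ) t, |s| * (L : ℝ) < 1 := by
      intro s hs
      have h1 : |s| ≤ |t| := by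
        rcases Set.mem_uIcc.mp hs with ⟨h1, h2⟩ | ⟨h1, h2⟩
        · rw [abs_of_nonneg h1]; exact h2.trans (le_abs_self t)
        · rw [abs_of_nonpos h2]; exact (neg_le_neg h1).trans (neg_le_abs t)
      calc |s| * (L : ℝ) ≤ ε * (L : ℝ) := by
            apply mul_le_mul_of_nonneg_right (h1.trans ht) L.coe_nonneg
        _ < 1 := hεL
    have hne : ∀ s ∈ Set.uIcc (0:ℝ) t, φ (s, M x) ≠ 0 := fun s hs =>
      hdet_ne s x (habs s hs)
    have hone : φ (0, M x) = 1 := by simp [hφ_def]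
    by_contra hle
    push_neg at hle
    have hcont : ContinuousOn (fun s : ℝ => φ (s, M x)) (Set.uIcc 0 t) :=
      (myContDiff_phi.continuous.comp (continuous_id.prodMk continuous_const)).continuousOn
    have h0mem : (0:ℝ) ∈ Set.uIcc (φ (0, M x)) (φ (t, M x)) := by
      rw [hone]; exact Set.mem_uIcc.mpr (Or.inr ⟨hle, zero_le_one⟩)
    obtain ⟨s, hsmem, hs0⟩ := intermediate_value_uIcc hcont h0mem
    exact hne s hsmem hs0
  -- the key differentiability statement
  have hK : IsCompact (tsupport A) := by
    rw [hA_def]; exact HasCompactSupport.fderiv (𝕜 := ℝ) hθc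
  have hMK : ∀ x, x ∉ tsupport A → M x = 0 := by
    intro x hx
    have : A x = 0 := image_eq_zero_of_notMem_tsupport hx
    simp [hM_def, this]
  have hw_cont : Continuous w := by
    rw [hw_def, hφ_def]
    exact (myContDiff_phi.continuous_fderiv one_ne_zero).clm_apply continuous_const
  set S : Set (ℝ × Matrix (Fin d) (Fin d) ℝ) :=
    Set.Icc (-ε) ε ×ˢ (M '' tsupport A ∪ {0}) with hS_def
  have hS : IsCompact S :=
    isCompact_Icc.prod ((hK.image hM_cont).union isCompact_singleton)
  obtain ⟨C, hC⟩ : ∃ C, ∀ p ∈ S, ‖w p‖ ≤ C :=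
    hS.exists_bound_of_continuousOn hw_cont.continuousOn
  have hmem : ∀ t ∈ Metric.ball (0:ℝ) ε, ∀ x, (t, M x) ∈ S := by
    intro t ht x
    constructor
    · have := Metric.mem_ball.mp ht
      rw [Real.dist_eq, sub_zero] at this
      exact ⟨neg_le_of_abs_le this.le, le_of_abs_le this.le⟩
    · by_cases hx : x ∈ tsupport A
      · exact Or.inl ⟨x, hx, rfl⟩
      · exact Or.inr (by simp [hMK x hx])
  haveI := hμfin
  have hFcont : ∀ t : ℝ, Continuous fun x => φ (t, M x) := fun t =>
    myContDiff_phi.continuous.comp (continuous_const.prodMk hM_cont)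
  have hkey := hasDerivAt_integral_of_dominated_loc_of_deriv_le (μ := μ)
    (F := fun t x => φ (t, M x)) (F' := fun t x => w (t, M x)) (bound := fun _ => C)
    (Metric.ball_mem_nhds (0:ℝ) hεpos)
    (Filter.Eventually.of_forall fun t => (hFcont t).aestronglyMeasurable)
    (by
      show Integrable (fun x => φ ((0:ℝ), M x)) μ
      have : (fun x => φ ((0:ℝ), M x)) = fun _ => (1:ℝ) := by
        funext x; simp [hφ_def]
      rw [this]; exact integrable_const _)
    ((hw_cont.comp (continuous_const.prodMk hM_cont)).aestronglyMeasurable)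
    (Filter.Eventually.of_forall fun x t ht => hC _ (hmem t ht x))
    (integrable_const C)
    (Filter.Eventually.of_forall fun x t _ => by
      simpa [hφ_def, hw_def] using myHasDerivAt_phi (M x) t)
  have hkey2 := hkey.2
  -- identify the derivative value
  have hw0 : ∀ N : Matrix (Fin d) (Fin d) ℝ, w (0, N) = Matrix.trace N := by
    intro N
    have h1 : HasDerivAt (fun s : ℝ => (1 + s • N).det) (w (0, N)) 0 := by
      simpa [hφ_def, hw_def] using myHasDerivAt_phi N 0
    exact h1.unique (myDeriv_at_zero N)
  have htrace : ∀ x, w (0, M x) = LinearMap.trace ℝ (EuclideanSpace ℝ (Fin d))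
      ((A x : EuclideanSpace ℝ (Fin d) →L[ℝ] EuclideanSpace ℝ (Fin d))
        : EuclideanSpace ℝ (Fin d) →ₗ[ℝ] EuclideanSpace ℝ (Fin d)) := by
    intro x
    rw [hw0, hM_def, LinearMap.trace_eq_matrix_trace ℝ b]
  rw [show (∫ x, w (0, M x) ∂μ) = ∫ x in Ω, LinearMap.trace ℝ (EuclideanSpace ℝ (Fin d))
      ((fderiv ℝ θ x : EuclideanSpace ℝ (Fin d) →L[ℝ] EuclideanSpace ℝ (Fin d))
        : EuclideanSpace ℝ (Fin d) →ₗ[ℝ] EuclideanSpace ℝ (Fin d)) from by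
    rw [hμ_def]; exact integral_congr_ae (Filter.Eventually.of_forall fun x => htrace x)] at hkey2
  -- now transfer along the eventual equality with the volume function
  apply hkey2.congr_of_eventuallyEq
  apply Filter.eventuallyEq_of_mem (Metric.ball_mem_nhds (0:ℝ) hεpos)
  intro t ht
  have htε : |t| < ε := by
    have := Metric.mem_ball.mp ht; rwa [Real.dist_eq, sub_zero] at this
  have htL : |t| * (L : ℝ) < 1 :=
    lt_of_le_of_lt (mul_le_mul_of_nonneg_right htε.le L.coe_nonneg) hεL
  -- derivative of the perturbed identity
  have s1 : ∀ x, HasFDerivAt (fun y => y + t • θ y) (1 + t • A x) x := by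
    intro x
    have h := (hasFDerivAt_id x).add (((hθ.differentiable one_ne_zero) x).hasFDerivAt.const_smul t)
    exact (by simpa [ContinuousLinearMap.one_def, hA_def] using h : HasFDerivAt (id + t • θ) (1 + t • A x) x)
  -- injectivity
  have hinj : Set.InjOn (fun y => y + t • θ y) Ω := by
    intro x hx y hy hxy
    by_contra hne
    have hsub : x - y = - (t • (θ x - θ y)) := by
      have h1 := sub_eq_zero.mpr hxy
      rw [show x + t • θ x - (y + t • θ y) = (x - y) + t • (θ x - θ y) by
        simp [smul_sub]; abel] at h1
      linear_combination (norm := module) h1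
    have h2 := congrArg norm hsub
    rw [norm_neg, norm_smul, Real.norm_eq_abs] at h2
    have h3 : ‖θ x - θ y‖ ≤ (L : ℝ) * ‖x - y‖ := by
      have := hθL.dist_le_mul x y
      rwa [dist_eq_norm, dist_eq_norm] at this
    have h4 : ‖x - y‖ ≤ |t| * (L : ℝ) * ‖x - y‖ := by
      calc ‖x - y‖ = |t| * ‖θ x - θ y‖ := h2
      _ ≤ |t| * ((L : ℝ) * ‖x - y‖) := by gcongr
      _ = |t| * (L : ℝ) * ‖x - y‖ := by ring
    have h5 : 0 < ‖x - y‖ := by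
      rw [norm_pos_iff]; intro h; exact hne (sub_eq_zero.mp h)
    nlinarith
  -- change of variables
  have hcv := lintegral_abs_det_fderiv_eq_addHaar_image volume hΩ
    (fun x _ => (s1 x).hasFDerivWithinAt) hinj
  have hpos : ∀ x, 0 < φ (t, M x) := hdet_pos t htε.le
  have habs : ∀ x : EuclideanSpace ℝ (Fin d),
      ENNReal.ofReal |(1 + t • A x :
        EuclideanSpace ℝ (Fin d) →L[ℝ] EuclideanSpace ℝ (Fin d)).det|
      = ENNReal.ofReal (φ (t, M x)) := by
    intro x
    rw [hdet_eq, abs_of_pos (hpos x)]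
  have hcv2 : (∫⁻ x in Ω, ENNReal.ofReal (φ (t, M x)) ∂volume)
      = volume ((fun y => y + t • θ y) '' Ω) := by
    rw [← hcv]
    exact lintegral_congr fun x => (habs x).symm
  have hint : ∫ x, φ (t, M x) ∂μ
      = (∫⁻ x, ENNReal.ofReal (φ (t, M x)) ∂μ).toReal :=
    integral_eq_lintegral_of_nonneg_ae
      (Filter.Eventually.of_forall fun x => (hpos x).le)
      (hFcont t).aestronglyMeasurable
  show (volume ((fun x => x + t • θ x) '' Ω)).toReal = ∫ x, φ (t, M x) ∂μ
  rw [hint, hμ_def, hcv2]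
end

section
/- (Shape derivative of a volume integral, interior form.) Let θ : ℝ^d → ℝ^d be a continuously differentiable, compactly supported vector field with Lipschitz constant L, let f : ℝ^d → ℝ be continuously differentiable with f and ∇f bounded, and let Ω ⊆ ℝ^d be Lebesgue measurable with finite measure. Then the function t ↦ ∫_{(I + tθ)(Ω)} f(x) dx, defined for |t|·L < 1, is differentiable at t = 0 with derivative ∫_Ω div(f·θ)(x) dx = ∫_Ω (∇f(x)·θ(x) + f(x)·div θ(x)) dx. -/
open MeasureTheory
open scoped RealInnerProductSpace

set_option maxHeartbeats 1600000
set_option synthInstance.maxHeartbeats 400000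

/-- The determinant, as a continuous multilinear map in the rows. -/
noncomputable def detCML (d : ℕ) : ContinuousMultilinearMap ℝ (fun _ : Fin d => (Fin d → ℝ)) ℝ :=
  (Matrix.detRowAlternating (R := ℝ) (n := Fin d)).toMultilinearMap.mkContinuous
    (Nat.factorial d) (fun m => by
      classical
      show |Matrix.det (Matrix.of m)| ≤ (Nat.factorial d : ℝ) * ∏ i, ‖m i‖
      rw [Matrix.det_apply]
      refine (Finset.abs_sum_le_sum_abs _ _).trans ?_
      have h : ∀ σ : Equiv.Perm (Fin d),
          |(Equiv.Perm.sign σ : ℤ) • ∏ i, Matrix.of m (σ i) i| ≤ ∏ i, ‖m i‖ := by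
        intro σ
        rw [abs_zsmul]
        have h1 : |(Equiv.Perm.sign σ : ℤ)| = 1 := by simp
        rw [h1, one_smul]
        calc |∏ i, Matrix.of m (σ i) i| = ∏ i, |m (σ i) i| := by
              rw [Finset.abs_prod]; rfl
          _ ≤ ∏ i, ‖m (σ i)‖ := by
              refine Finset.prod_le_prod (fun i _ => abs_nonneg _) (fun i _ => ?_)
              exact norm_le_pi_norm (m (σ i)) i
          _ = ∏ i, ‖m i‖ := Equiv.prod_comp σ (fun i => ‖m i‖)
      calc ∑ σ : Equiv.Perm (Fin d), |(Equiv.Perm.sign σ : ℤ) • ∏ i, Matrix.of m (σ i) i|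
          ≤ ∑ _σ : Equiv.Perm (Fin d), ∏ i, ‖m i‖ := Finset.sum_le_sum (fun σ _ => h σ)
        _ = (Nat.factorial d) * ∏ i, ‖m i‖ := by
            rw [Finset.sum_const, Finset.card_univ, Fintype.card_perm, nsmul_eq_mul]
            simp)

lemma detCML_apply (d : ℕ) (m : Fin d → Fin d → ℝ) :
    detCML d m = Matrix.det (Matrix.of m) := rfl

/-- Shape derivative of a volume integral (interior form): for a `C¹`, compactly
supported, Lipschitz vector field `θ`, a `C¹` function `f` with `f` and `∇f` bounded,
and a measurable set `Ω` of finite measure, the map `t ↦ ∫_{(I + tθ)(Ω)} f dx` is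
differentiable at `t = 0` with derivative
`∫_Ω div(f θ) dx = ∫_Ω (∇f · θ + f div θ) dx`. -/
theorem hasDerivAt_integral_perturbed_identity {d : ℕ}
    (θ : EuclideanSpace ℝ (Fin d) → EuclideanSpace ℝ (Fin d))
    (hθ : ContDiff ℝ 1 θ) (hθc : HasCompactSupport θ)
    (L : NNReal) (hθL : LipschitzWith L θ)
    (f : EuclideanSpace ℝ (Fin d) → ℝ) (hf : ContDiff ℝ 1 f)
    (Mf : ℝ) (hfb : ∀ x, |f x| ≤ Mf)
    (Mg : ℝ) (hgb : ∀ x, ‖gradient f x‖ ≤ Mg)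
    (Ω : Set (EuclideanSpace ℝ (Fin d))) (hΩ : MeasurableSet Ω)
    (hΩfin : volume Ω < ⊤) :
    HasDerivAt (fun t : ℝ => ∫ x in (fun x => x + t • θ x) '' Ω, f x)
      (∫ x in Ω, (⟪gradient f x, θ x⟫ +
        f x * LinearMap.trace ℝ (EuclideanSpace ℝ (Fin d))
          ((fderiv ℝ θ x : EuclideanSpace ℝ (Fin d) →L[ℝ] EuclideanSpace ℝ (Fin d))
            : EuclideanSpace ℝ (Fin d) →ₗ[ℝ] EuclideanSpace ℝ (Fin d)))) 0 := by
  classical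
  set A : (EuclideanSpace ℝ (Fin d)) → ((EuclideanSpace ℝ (Fin d)) →L[ℝ] (EuclideanSpace ℝ (Fin d))) := fderiv ℝ θ with hA
  have hθd : Differentiable ℝ θ := hθ.differentiable one_ne_zero
  have hfd : Differentiable ℝ f := hf.differentiable one_ne_zero
  have hA_cont : Continuous A := hθ.continuous_fderiv one_ne_zero
  have hA_le : ∀ x, ‖A x‖ ≤ (L : ℝ) := fun x => norm_fderiv_le_of_lipschitz ℝ hθL
  obtain ⟨Cθ, hCθ⟩ := hθc.exists_bound_of_continuous hθ.continuous
  have hCθ0 : 0 ≤ Cθ := le_trans (norm_nonneg _) (hCθ 0)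
  have hMf0 : 0 ≤ Mf := (abs_nonneg _).trans (hfb 0)
  have hMg0 : 0 ≤ Mg := (norm_nonneg _).trans (hgb 0)
  -- the basis and matrix of `A x`
  set b : Module.Basis (Fin d) ℝ (EuclideanSpace ℝ (Fin d)) := (EuclideanSpace.basisFun (Fin d) ℝ).toBasis with hb
  set M : (EuclideanSpace ℝ (Fin d)) → Matrix (Fin d) (Fin d) ℝ :=
    fun x => LinearMap.toMatrix b b ((A x : (EuclideanSpace ℝ (Fin d)) →ₗ[ℝ] (EuclideanSpace ℝ (Fin d)))) with hM
  have hM_entry : ∀ x i j, |M x i j| ≤ (L : ℝ) := by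
    intro x i j
    rw [hM]
    simp only
    rw [LinearMap.toMatrix_apply]
    have h1 : ((b.repr ((A x : (EuclideanSpace ℝ (Fin d)) →ₗ[ℝ] (EuclideanSpace ℝ (Fin d))) (b j))) i) = ((A x) (b j) : (EuclideanSpace ℝ (Fin d))) i := by
      rw [hb, OrthonormalBasis.coe_toBasis_repr_apply, EuclideanSpace.basisFun_repr]
      rfl
    rw [h1]
    have h2 : |((A x) (b j) : (EuclideanSpace ℝ (Fin d))) i| ≤ ‖(A x) (b j)‖ := by
      have hi := EuclideanSpace.inner_single_left (𝕜 := ℝ) i (1:ℝ) ((A x) (b j))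
      have hle := abs_real_inner_le_norm (EuclideanSpace.single i (1:ℝ)) ((A x) (b j))
      rw [hi] at hle
      simpa using hle
    refine h2.trans ?_
    calc ‖(A x) (b j)‖ ≤ ‖A x‖ * ‖(b j : (EuclideanSpace ℝ (Fin d)))‖ := (A x).le_opNorm _
      _ ≤ (L : ℝ) := by
          have : ‖(b j : (EuclideanSpace ℝ (Fin d)))‖ = 1 := by
            rw [hb, OrthonormalBasis.coe_toBasis, EuclideanSpace.basisFun_apply,
              EuclideanSpace.norm_single, norm_one]
          rw [this, mul_one]; exact hA_le x
  -- the determinant function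
  have hdet_eq : ∀ (t : ℝ) (x : (EuclideanSpace ℝ (Fin d))),
      ContinuousLinearMap.det (1 + t • A x) = Matrix.det (1 + t • M x) := by
    intro t x
    rw [ContinuousLinearMap.det, ← LinearMap.det_toMatrix b]
    congr 1
    have hcoe : ((1 + t • A x : (EuclideanSpace ℝ (Fin d)) →L[ℝ] (EuclideanSpace ℝ (Fin d))) : (EuclideanSpace ℝ (Fin d)) →ₗ[ℝ] (EuclideanSpace ℝ (Fin d)))
        = 1 + t • ((A x : (EuclideanSpace ℝ (Fin d)) →ₗ[ℝ] (EuclideanSpace ℝ (Fin d)))) := by ext y; simp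
    rw [hcoe, map_add, LinearEquiv.map_smul, hM]
    congr 1
    exact LinearMap.toMatrix_one _
  -- rows
  set r : ℝ → (EuclideanSpace ℝ (Fin d)) → (Fin d → Fin d → ℝ) := fun t x i => (1 + t • M x) i with hr
  have hdet_row : ∀ (t : ℝ) (x : (EuclideanSpace ℝ (Fin d))), Matrix.det (1 + t • M x) = detCML d (r t x) := by
    intro t x; rw [detCML_apply]; rfl
  have hr_norm : ∀ (t : ℝ) (x : (EuclideanSpace ℝ (Fin d))) (i : Fin d), |t| ≤ 1 → ‖r t x i‖ ≤ 1 + (L : ℝ) := by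
    intro t x i ht
    rw [pi_norm_le_iff_of_nonneg (by positivity)]
    intro j
    have h1 : r t x i j = (1 : Matrix (Fin d) (Fin d) ℝ) i j + t * M x i j := by
      simp [hr, Matrix.add_apply, Matrix.smul_apply, smul_eq_mul]
    rw [Real.norm_eq_abs, h1]
    rcases eq_or_ne i j with rfl | hij
    · rw [Matrix.one_apply_eq]
      calc |1 + t * M x i i| ≤ |(1:ℝ)| + |t * M x i i| := abs_add_le _ _
        _ ≤ 1 + (L:ℝ) := by
            rw [abs_one, abs_mul]
            have := hM_entry x i i
            nlinarith [abs_nonneg t, abs_nonneg (M x i i)]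
    · rw [Matrix.one_apply_ne hij, zero_add, abs_mul]
      have := hM_entry x i j
      nlinarith [abs_nonneg t, abs_nonneg (M x i j)]
  have hr_pi_norm : ∀ (t : ℝ) (x : (EuclideanSpace ℝ (Fin d))), |t| ≤ 1 → ‖r t x‖ ≤ 1 + (L : ℝ) := by
    intro t x ht
    rw [pi_norm_le_iff_of_nonneg (by positivity)]
    exact fun i => hr_norm t x i ht
  have hr_sub : ∀ (t s : ℝ) (x : (EuclideanSpace ℝ (Fin d))), ‖r t x - r s x‖ ≤ |t - s| * (L : ℝ) := by
    intro t s x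
    rw [pi_norm_le_iff_of_nonneg (by positivity)]
    intro i
    rw [pi_norm_le_iff_of_nonneg (by positivity)]
    intro j
    have h1 : (r t x - r s x) i j = (t - s) * M x i j := by
      simp [hr, Matrix.add_apply, Matrix.smul_apply, smul_eq_mul]
      ring
    rw [Real.norm_eq_abs, h1, abs_mul]
    have := hM_entry x i j
    nlinarith [abs_nonneg (t - s), abs_nonneg (M x i j)]
  -- bounds and Lipschitz estimates for the determinant in `t`
  set Cd : ℝ := ‖detCML d‖ * (1 + (L:ℝ)) ^ d with hCd
  have hCd0 : 0 ≤ Cd := by positivity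
  have hg_bound : ∀ (t : ℝ) (x : (EuclideanSpace ℝ (Fin d))), |t| ≤ 1 → |Matrix.det (1 + t • M x)| ≤ Cd := by
    intro t x ht
    rw [hdet_row]
    calc |detCML d (r t x)| ≤ ‖detCML d‖ * ∏ _i : Fin d, ‖r t x _i‖ :=
          (detCML d).le_opNorm (r t x)
      _ ≤ Cd := by
          rw [hCd]
          refine mul_le_mul_of_nonneg_left ?_ (norm_nonneg _)
          calc (∏ i : Fin d, ‖r t x i‖) ≤ ∏ _i : Fin d, (1 + (L:ℝ)) :=
                Finset.prod_le_prod (fun i _ => norm_nonneg _) (fun i _ => hr_norm t x i ht)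
            _ = (1 + (L:ℝ)) ^ d := by simp [Finset.prod_const]
  set Kd : ℝ := ‖detCML d‖ * d * (1 + (L:ℝ)) ^ (d - 1) * (L : ℝ) with hKd
  have hKd0 : 0 ≤ Kd := by positivity
  have hg_lip : ∀ (t s : ℝ) (x : (EuclideanSpace ℝ (Fin d))), |t| ≤ 1 → |s| ≤ 1 →
      |Matrix.det (1 + t • M x) - Matrix.det (1 + s • M x)| ≤ Kd * |t - s| := by
    intro t s x ht hs
    rw [hdet_row, hdet_row]
    calc |detCML d (r t x) - detCML d (r s x)|
        ≤ ‖detCML d‖ * (Fintype.card (Fin d)) *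
            max ‖r t x‖ ‖r s x‖ ^ (Fintype.card (Fin d) - 1) * ‖r t x - r s x‖ :=
          (detCML d).norm_image_sub_le (r t x) (r s x)
      _ ≤ ‖detCML d‖ * d * (1 + (L:ℝ)) ^ (d - 1) * (|t - s| * (L:ℝ)) := by
          rw [Fintype.card_fin]
          refine mul_le_mul ?_ (hr_sub t s x) (norm_nonneg _) (by positivity)
          refine mul_le_mul_of_nonneg_left ?_ (by positivity)
          refine pow_le_pow_left₀ (le_max_iff.mpr (Or.inl (norm_nonneg _))) ?_ _
          exact max_le (hr_pi_norm t x ht) (hr_pi_norm s x hs)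
      _ = Kd * |t - s| := by rw [hKd]; ring
  -- derivative of the determinant at 0
  have hg_deriv : ∀ x : (EuclideanSpace ℝ (Fin d)),
      HasDerivAt (fun t : ℝ => Matrix.det (1 + t • M x)) (Matrix.trace (M x)) 0 := by
    intro x
    set q : Polynomial ℝ :=
      (Matrix.det (1 + (Polynomial.X : Polynomial ℝ) • (M x).map Polynomial.C)).divX.divX with hq
    have hfun : (fun t : ℝ => Matrix.det (1 + t • M x))
        = fun t : ℝ => 1 + Matrix.trace (M x) * t + q.eval t * t ^ 2 := by
      funext t; exact Matrix.det_one_add_smul t (M x)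
    have h1 : HasDerivAt (fun t : ℝ => 1 + Matrix.trace (M x) * t) (Matrix.trace (M x)) 0 := by
      simpa using ((hasDerivAt_id (0:ℝ)).const_mul (Matrix.trace (M x))).const_add 1
    have h2 : HasDerivAt (fun t : ℝ => q.eval t * t ^ 2) 0 0 := by
      have := (Polynomial.hasDerivAt q (0:ℝ)).mul (hasDerivAt_pow 2 (0:ℝ))
      exact this.congr_deriv (by simp)
    have h3 : HasDerivAt (fun t : ℝ => 1 + Matrix.trace (M x) * t + q.eval t * t ^ 2)
        (Matrix.trace (M x)) 0 := by
      exact (h1.add h2).congr_deriv (by simp)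
    exact h3.congr_of_eventuallyEq
      (Filter.Eventually.of_forall (fun t : ℝ => Matrix.det_one_add_smul t (M x)))
  -- the function `t ↦ f (x + t θ x)`
  have hf_lip : LipschitzWith (Real.toNNReal Mg) f := by
    refine lipschitzWith_of_nnnorm_fderiv_le (hfd) (fun x => ?_)
    rw [← NNReal.coe_le_coe, coe_nnnorm, Real.coe_toNNReal _ hMg0]
    have : ‖fderiv ℝ f x‖ = ‖gradient f x‖ := by
      rw [gradient]
      exact (LinearIsometryEquiv.norm_map _ _).symm
    rw [this]
    exact hgb x
  have hγ_deriv : ∀ x : (EuclideanSpace ℝ (Fin d)), HasDerivAt (fun t : ℝ => x + t • θ x) (θ x) 0 := by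
    intro x
    simpa using ((hasDerivAt_id (0:ℝ)).smul_const (θ x)).const_add x
  have hfc_deriv : ∀ x : (EuclideanSpace ℝ (Fin d)),
      HasDerivAt (fun t : ℝ => f (x + t • θ x)) ⟪gradient f x, θ x⟫ 0 := by
    intro x
    have h0 : x + (0:ℝ) • θ x = x := by simp
    have := ((hfd (x + (0:ℝ) • θ x)).hasFDerivAt).comp_hasDerivAt 0 (hγ_deriv x)
    rw [h0] at this
    have hg : ⟪gradient f x, θ x⟫ = fderiv ℝ f x (θ x) := by
      rw [gradient]
      exact InnerProductSpace.toDual_symm_apply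
    rwa [hg]
  have hfc_lip : ∀ x : (EuclideanSpace ℝ (Fin d)), LipschitzWith (Real.toNNReal (Mg * Cθ))
      (fun t : ℝ => f (x + t • θ x)) := by
    intro x
    have hx : LipschitzWith (Real.toNNReal Cθ) (fun t : ℝ => x + t • θ x) := by
      refine LipschitzWith.of_dist_le_mul (fun t s => ?_)
      rw [dist_eq_norm, dist_eq_norm]
      have he : x + t • θ x - (x + s • θ x) = (t - s) • θ x := by module
      rw [he, norm_smul, Real.coe_toNNReal _ hCθ0]
      rw [mul_comm]
      exact mul_le_mul_of_nonneg_right (hCθ x) (norm_nonneg _)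
    have hcomp := hf_lip.comp hx
    refine LipschitzWith.weaken hcomp ?_
    rw [← NNReal.coe_le_coe]
    push_cast
    rw [Real.coe_toNNReal _ hMg0, Real.coe_toNNReal _ hCθ0,
      Real.coe_toNNReal _ (by positivity : (0:ℝ) ≤ Mg * Cθ)]
  -- the integrand
  set F : ℝ → (EuclideanSpace ℝ (Fin d)) → ℝ :=
    fun t x => |ContinuousLinearMap.det (1 + t • A x)| * f (x + t • θ x) with hF
  set F' : (EuclideanSpace ℝ (Fin d)) → ℝ := fun x => ⟪gradient f x, θ x⟫ +
      f x * LinearMap.trace ℝ (EuclideanSpace ℝ (Fin d)) ((A x : (EuclideanSpace ℝ (Fin d)) →ₗ[ℝ] (EuclideanSpace ℝ (Fin d)))) with hF'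
  set K : ℝ := Cd * (Mg * Cθ) + Mf * Kd with hK
  have hK0 : 0 ≤ K := by positivity
  set μ : Measure (EuclideanSpace ℝ (Fin d)) := volume.restrict Ω with hμ
  haveI : IsFiniteMeasure μ := by
    constructor
    rw [hμ, Measure.restrict_apply_univ]
    exact hΩfin
  -- continuity in x
  have hF_cont : ∀ t : ℝ, Continuous (F t) := by
    intro t
    refine Continuous.mul ?_ (hf.continuous.comp ?_)
    · exact (ContinuousLinearMap.continuous_det.comp
        (continuous_const.add (hA_cont.const_smul t))).abs
    · exact continuous_id.add (hθ.continuous.const_smul t)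
  have hF'_cont : Continuous F' := by
    refine Continuous.add ?_ (Continuous.mul hf.continuous ?_)
    · refine Continuous.inner ?_ hθ.continuous
      have : Continuous (fderiv ℝ f) := hf.continuous_fderiv one_ne_zero
      exact (LinearIsometryEquiv.continuous _).comp this
    · set l : ((EuclideanSpace ℝ (Fin d)) →L[ℝ] (EuclideanSpace ℝ (Fin d))) →ₗ[ℝ] ℝ :=
        (LinearMap.trace ℝ (EuclideanSpace ℝ (Fin d))) ∘ₗ (ContinuousLinearMap.coeLM ℝ) with hl
      have hlc : Continuous l := l.continuous_of_finiteDimensional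
      exact hlc.comp hA_cont
  -- Lipschitz estimate
  have hF_lipOn : ∀ x : (EuclideanSpace ℝ (Fin d)), LipschitzOnWith (Real.nnabs K) (fun t : ℝ => F t x)
      (Metric.ball (0:ℝ) 1) := by
    intro x
    refine LipschitzOnWith.of_dist_le_mul (fun t ht s hs => ?_)
    rw [Metric.mem_ball, Real.dist_eq, sub_zero] at ht hs
    have ht1 : |t| ≤ 1 := ht.le
    have hs1 : |s| ≤ 1 := hs.le
    rw [Real.dist_eq, Real.dist_eq]
    have key : |F t x - F s x| ≤ K * |t - s| := by
      set Dt : ℝ := |ContinuousLinearMap.det (1 + t • A x)| with hDt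
      set Ds : ℝ := |ContinuousLinearMap.det (1 + s • A x)| with hDs
      have e1 : F t x - F s x
          = Dt * (f (x + t • θ x) - f (x + s • θ x))
            + (Dt - Ds) * f (x + s • θ x) := by
        rw [hF]; ring
      rw [e1]
      refine (abs_add_le _ _).trans ?_
      rw [abs_mul, abs_mul]
      have b1 : |Dt| ≤ Cd := by
        rw [hDt, abs_abs, hdet_eq]
        exact hg_bound t x ht1
      have b2 : |f (x + t • θ x) - f (x + s • θ x)| ≤ (Mg * Cθ) * |t - s| := by
        have := (hfc_lip x).dist_le_mul t s
        rw [Real.dist_eq, Real.dist_eq, Real.coe_toNNReal _ (by positivity : (0:ℝ) ≤ Mg * Cθ)] at this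
        exact this
      have b3 : |Dt - Ds| ≤ Kd * |t - s| := by
        rw [hDt, hDs]
        refine (abs_abs_sub_abs_le_abs_sub _ _).trans ?_
        rw [hdet_eq, hdet_eq]
        exact hg_lip t s x ht1 hs1
      have b4 : |f (x + s • θ x)| ≤ Mf := hfb _
      calc |Dt| * |f (x + t • θ x) - f (x + s • θ x)| + |Dt - Ds| * |f (x + s • θ x)|
          ≤ Cd * ((Mg * Cθ) * |t - s|) + (Kd * |t - s|) * Mf := by
            refine add_le_add ?_ ?_
            · exact mul_le_mul b1 b2 (abs_nonneg _) hCd0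
            · exact mul_le_mul b3 b4 (abs_nonneg _) (by positivity)
        _ = K * |t - s| := by rw [hK]; ring
    refine key.trans ?_
    refine mul_le_mul_of_nonneg_right ?_ (abs_nonneg _)
    rw [Real.coe_nnabs]
    exact le_abs_self K
  -- derivative at 0
  have hF_deriv : ∀ x : (EuclideanSpace ℝ (Fin d)), HasDerivAt (fun t : ℝ => F t x) (F' x) 0 := by
    intro x
    have hgd := hg_deriv x
    have hpos : ∀ᶠ t in nhds (0:ℝ), 0 < Matrix.det (1 + t • M x) := by
      have hc : ContinuousAt (fun t : ℝ => Matrix.det (1 + t • M x)) 0 := hgd.continuousAt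
      have h0 : Matrix.det (1 + (0:ℝ) • M x) = 1 := by simp
      have := hc.preimage_mem_nhds (Ioi_mem_nhds (by rw [h0]; norm_num : (0:ℝ) < Matrix.det (1 + (0:ℝ) • M x)))
      exact this
    have heq : (fun t : ℝ => F t x) =ᶠ[nhds (0:ℝ)]
        (fun t : ℝ => Matrix.det (1 + t • M x) * f (x + t • θ x)) := by
      filter_upwards [hpos] with t htpos
      rw [hF]
      simp only
      rw [hdet_eq, abs_of_pos htpos]
    have hprod : HasDerivAt (fun t : ℝ => Matrix.det (1 + t • M x) * f (x + t • θ x))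
        (Matrix.trace (M x) * f (x + (0:ℝ) • θ x)
          + Matrix.det (1 + (0:ℝ) • M x) * ⟪gradient f x, θ x⟫) 0 :=
      hgd.mul (hfc_deriv x)
    have hval : Matrix.trace (M x) * f (x + (0:ℝ) • θ x)
          + Matrix.det (1 + (0:ℝ) • M x) * ⟪gradient f x, θ x⟫ = F' x := by
      rw [hF']
      have h0 : x + (0:ℝ) • θ x = x := by simp
      have h1 : Matrix.det (1 + (0:ℝ) • M x) = 1 := by simp
      have h2 : Matrix.trace (M x) = LinearMap.trace ℝ (EuclideanSpace ℝ (Fin d)) ((A x : (EuclideanSpace ℝ (Fin d)) →ₗ[ℝ] (EuclideanSpace ℝ (Fin d)))) :=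
        (LinearMap.trace_eq_matrix_trace ℝ b _).symm
      rw [h0, h1, h2]; ring
    rw [hval] at hprod
    exact hprod.congr_of_eventuallyEq heq
  -- dominated differentiation
  have hF_meas : ∀ᶠ t in nhds (0:ℝ), AEStronglyMeasurable (F t) μ :=
    Filter.Eventually.of_forall (fun t : ℝ => (hF_cont t).aestronglyMeasurable)
  have hF_int : Integrable (F 0) μ := by
    refine ⟨(hF_cont 0).aestronglyMeasurable, ?_⟩
    refine HasFiniteIntegral.of_bounded (C := Cd * Mf) ?_
    refine ae_of_all μ (fun x => ?_)
    rw [Real.norm_eq_abs, hF, abs_mul, abs_abs]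
    refine mul_le_mul ?_ (hfb _) (abs_nonneg _) hCd0
    rw [hdet_eq]
    exact hg_bound 0 x (by norm_num)
  have hF'_meas : AEStronglyMeasurable F' μ := hF'_cont.aestronglyMeasurable
  have hbound_int : Integrable (fun _ : (EuclideanSpace ℝ (Fin d)) => K) μ := integrable_const K
  obtain ⟨-, hKey⟩ := hasDerivAt_integral_of_dominated_loc_of_lip
    (F := F) (F' := F') (bound := fun _ => K) (Metric.ball_mem_nhds 0 one_pos)
    hF_meas hF_int hF'_meas (ae_of_all μ (fun x => hF_lipOn x)) hbound_int
    (ae_of_all μ (fun x => hF_deriv x))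
  -- identify the two functions near 0
  have hne : (0:ℝ) < (1 + (L:ℝ))⁻¹ := by positivity
  have heq : (fun t : ℝ => ∫ x in (fun x => x + t • θ x) '' Ω, f x)
      =ᶠ[nhds (0:ℝ)] (fun t : ℝ => ∫ x, F t x ∂μ) := by
    filter_upwards [Metric.ball_mem_nhds (0:ℝ) hne] with t ht
    rw [Metric.mem_ball, Real.dist_eq, sub_zero] at ht
    have htL : |t| * (L:ℝ) < 1 := by
      calc |t| * (L:ℝ) ≤ |t| * (1 + (L:ℝ)) := by
            refine mul_le_mul_of_nonneg_left (by linarith [NNReal.coe_nonneg L]) (abs_nonneg t)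
        _ < (1 + (L:ℝ))⁻¹ * (1 + (L:ℝ)) := by
            refine mul_lt_mul_of_pos_right ht (by positivity)
        _ = 1 := by field_simp
    have hderivW : ∀ x ∈ Ω, HasFDerivWithinAt (fun x => x + t • θ x) (1 + t • A x) Ω x := by
      intro x _
      have : HasFDerivAt (fun x => x + t • θ x)
          (ContinuousLinearMap.id ℝ (EuclideanSpace ℝ (Fin d)) + t • A x) x :=
        (hasFDerivAt_id x).add (((hθd x).hasFDerivAt).const_smul t)
      exact this.hasFDerivWithinAt
    have hinj : Set.InjOn (fun x => x + t • θ x) Ω := by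
      intro x _ y _ hxy
      simp only at hxy
      by_contra hne'
      have h1 : x - y = t • (θ y - θ x) := by
        have := hxy
        rw [smul_sub]
        apply eq_of_sub_eq_zero
        have : x - y - (t • θ y - t • θ x) = (x + t • θ x) - (y + t • θ y) := by module
        rw [this, hxy, sub_self]
      have h2 : ‖x - y‖ ≤ |t| * ((L:ℝ) * ‖x - y‖) := by
        calc ‖x - y‖ = |t| * ‖θ y - θ x‖ := by
              rw [h1, norm_smul, Real.norm_eq_abs]
          _ ≤ |t| * ((L:ℝ) * ‖x - y‖) := by
              refine mul_le_mul_of_nonneg_left ?_ (abs_nonneg t)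
              have := hθL.dist_le_mul y x
              rw [dist_eq_norm, dist_eq_norm] at this
              calc ‖θ y - θ x‖ ≤ (L:ℝ) * ‖y - x‖ := this
                _ = (L:ℝ) * ‖x - y‖ := by rw [norm_sub_rev]
      have hnorm_pos : 0 < ‖x - y‖ := by
        rw [norm_pos_iff, sub_ne_zero]
        exact hne'
      nlinarith
    have := integral_image_eq_integral_abs_det_fderiv_smul volume hΩ hderivW hinj f
    rw [this]
    rw [hμ]
    refine setIntegral_congr_fun hΩ (fun x _ => ?_)
    rw [hF]
    simp [smul_eq_mul]
  exact hKey.congr_of_eventuallyEq heq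
end
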